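/- Suppose P satisfies the Doeblin condition with constant a ∈ (0,1) and P_ε is another Markov kernel with ‖P_ε(x,·) − P(x,·)‖_TV ≤ ε for all x. Then any stationary distribution μ_ε of P_ε satisfies ‖μ − μ_ε‖_TV ≤ ε/a, where μ is the stationary measure of P. -/

import Mathlib

open MeasureTheory ProbabilityTheory Filter
open scoped ENNReal

/-- Total variation distance between two measures. -/
noncomputable def tvDist {X : Type*} [MeasurableSpace X] (μ ν : Measure X) : ℝ :=
  ⨆ s : {s : Set X // MeasurableSet s}, |(μ s.1).toReal - (ν s.1).toReal|

/-- One step of a Markov kernel acting on a measure. -/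
noncomputable def stepK {X : Type*} [MeasurableSpace X] (κ : Kernel X X) (ν : Measure X) :
    Measure X :=
  ν.bind (fun x => κ x)

lemma abs_le_tvDist {X : Type*} [MeasurableSpace X] (μ ν : Measure X)
    [IsProbabilityMeasure μ] [IsProbabilityMeasure ν] {s : Set X} (hs : MeasurableSet s) :
    |(μ s).toReal - (ν s).toReal| ≤ tvDist μ ν := by
  have hbdd : BddAbove (Set.range fun s : {s : Set X // MeasurableSet s} =>
      |(μ s.1).toReal - (ν s.1).toReal|) := by
    refine ⟨1, ?_⟩
    rintro r ⟨t, rfl⟩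
    have h1 : (μ t.1).toReal ≤ 1 := by
      have := prob_le_one (μ := μ) (s := t.1)
      simpa using ENNReal.toReal_mono ENNReal.one_ne_top this
    have h2 : (ν t.1).toReal ≤ 1 := by
      have := prob_le_one (μ := ν) (s := t.1)
      simpa using ENNReal.toReal_mono ENNReal.one_ne_top this
    have h3 : (0:ℝ) ≤ (μ t.1).toReal := ENNReal.toReal_nonneg
    have h4 : (0:ℝ) ≤ (ν t.1).toReal := ENNReal.toReal_nonneg
    rw [abs_sub_le_iff]
    constructor <;> linarith
  exact le_ciSup hbdd (⟨s, hs⟩ : {s : Set X // MeasurableSet s})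

lemma tvDist_le {X : Type*} [MeasurableSpace X] (μ ν : Measure X) {r : ℝ}
    (h : ∀ s : Set X, MeasurableSet s → |(μ s).toReal - (ν s).toReal| ≤ r) :
    tvDist μ ν ≤ r := by
  have : Nonempty {s : Set X // MeasurableSet s} := ⟨⟨∅, MeasurableSet.empty⟩⟩
  exact ciSup_le fun s => h s.1 s.2

lemma tvDist_nonneg {X : Type*} [MeasurableSpace X] (μ ν : Measure X)
    [IsProbabilityMeasure μ] [IsProbabilityMeasure ν] : 0 ≤ tvDist μ ν := by
  have := abs_le_tvDist μ ν MeasurableSet.empty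
  calc (0:ℝ) ≤ |(μ ∅).toReal - (ν ∅).toReal| := abs_nonneg _
  _ ≤ tvDist μ ν := this

/-- Key comparison lemma via the layer-cake formula. -/
lemma integral_le_integral_add {X : Type*} [MeasurableSpace X]
    (μ ν : Measure X) [IsProbabilityMeasure μ] [IsProbabilityMeasure ν]
    {f : X → ℝ} (hf : Measurable f) {b D : ℝ} (hb : 0 ≤ b) (hD : 0 ≤ D)
    (hf0 : ∀ x, 0 ≤ f x) (hfb : ∀ x, f x ≤ b)
    (hsets : ∀ s : Set X, MeasurableSet s → (μ s).toReal ≤ (ν s).toReal + D) :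
    ∫ x, f x ∂μ ≤ ∫ x, f x ∂ν + b * D := by
  have hmeas : ∀ t : ℝ, MeasurableSet {x | t < f x} := fun t =>
    measurableSet_lt measurable_const hf
  have hμν : ∀ s : Set X, MeasurableSet s → μ s ≤ ν s + ENNReal.ofReal D := by
    intro s hs
    calc μ s = ENNReal.ofReal (μ s).toReal := (ENNReal.ofReal_toReal (measure_ne_top μ s)).symm
    _ ≤ ENNReal.ofReal ((ν s).toReal + D) := ENNReal.ofReal_le_ofReal (hsets s hs)
    _ = ENNReal.ofReal (ν s).toReal + ENNReal.ofReal D :=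
        ENNReal.ofReal_add ENNReal.toReal_nonneg hD
    _ = ν s + ENNReal.ofReal D := by rw [ENNReal.ofReal_toReal (measure_ne_top ν s)]
  have key : ∀ ρ : Measure X, ∫⁻ x, ENNReal.ofReal (f x) ∂ρ
      = ∫⁻ t in Set.Ioi 0, ρ {x | t < f x} := fun ρ =>
    lintegral_eq_lintegral_meas_lt ρ (Eventually.of_forall hf0) hf.aemeasurable
  have hfin : ∀ ρ : Measure X, [IsProbabilityMeasure ρ] →
      ∫⁻ x, ENNReal.ofReal (f x) ∂ρ ≤ ENNReal.ofReal b := by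
    intro ρ hρ
    calc ∫⁻ x, ENNReal.ofReal (f x) ∂ρ ≤ ∫⁻ _, ENNReal.ofReal b ∂ρ :=
          lintegral_mono fun x => ENNReal.ofReal_le_ofReal (hfb x)
    _ = ENNReal.ofReal b := by simp
  have step : ∫⁻ x, ENNReal.ofReal (f x) ∂μ
      ≤ ∫⁻ x, ENNReal.ofReal (f x) ∂ν + ENNReal.ofReal D * ENNReal.ofReal b := by
    rw [key μ, key ν]
    have pt : ∀ᵐ t ∂(volume.restrict (Set.Ioi (0:ℝ))),
        μ {x | t < f x} ≤ ν {x | t < f x}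
          + Set.indicator (Set.Ioc 0 b) (fun _ => ENNReal.ofReal D) t := by
      filter_upwards [ae_restrict_mem measurableSet_Ioi] with t ht
      by_cases htb : t ≤ b
      · rw [Set.indicator_of_mem (Set.mem_Ioc.mpr ⟨ht, htb⟩)]
        exact hμν _ (hmeas t)
      · have hempty : {x | t < f x} = ∅ := by
          ext x
          simp only [Set.mem_setOf_eq, Set.mem_empty_iff_false, iff_false, not_lt]
          exact (hfb x).trans (le_of_not_ge htb)
        simp [hempty]
    calc ∫⁻ t in Set.Ioi 0, μ {x | t < f x}
        ≤ ∫⁻ t in Set.Ioi 0, (ν {x | t < f x}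
            + Set.indicator (Set.Ioc 0 b) (fun _ => ENNReal.ofReal D) t) :=
          lintegral_mono_ae pt
    _ = (∫⁻ t in Set.Ioi 0, ν {x | t < f x})
          + ∫⁻ t in Set.Ioi 0, Set.indicator (Set.Ioc 0 b) (fun _ => ENNReal.ofReal D) t :=
          lintegral_add_right _ (measurable_const.indicator measurableSet_Ioc)
    _ ≤ (∫⁻ t in Set.Ioi 0, ν {x | t < f x}) + ENNReal.ofReal D * ENNReal.ofReal b := by
          gcongr
          rw [lintegral_indicator measurableSet_Ioc]
          calc ∫⁻ _ in Set.Ioc 0 b, ENNReal.ofReal D ∂(volume.restrict (Set.Ioi 0))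
              = ENNReal.ofReal D * (volume.restrict (Set.Ioi 0)) (Set.Ioc 0 b) :=
                setLIntegral_const _ _
          _ ≤ ENNReal.ofReal D * ENNReal.ofReal b := by
                gcongr
                rw [Measure.restrict_apply measurableSet_Ioc]
                calc volume (Set.Ioc 0 b ∩ Set.Ioi 0) ≤ volume (Set.Ioc 0 b) :=
                      measure_mono Set.inter_subset_left
                _ = ENNReal.ofReal b := by rw [Real.volume_Ioc, sub_zero]
  have hμr : ∫ x, f x ∂μ = (∫⁻ x, ENNReal.ofReal (f x) ∂μ).toReal :=
    integral_eq_lintegral_of_nonneg_ae (Eventually.of_forall hf0) hf.aestronglyMeasurable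
  have hνr : ∫ x, f x ∂ν = (∫⁻ x, ENNReal.ofReal (f x) ∂ν).toReal :=
    integral_eq_lintegral_of_nonneg_ae (Eventually.of_forall hf0) hf.aestronglyMeasurable
  have hνfin : ∫⁻ x, ENNReal.ofReal (f x) ∂ν ≠ ∞ :=
    ((hfin ν).trans_lt ENNReal.ofReal_lt_top).ne
  have hrhs : ∫⁻ x, ENNReal.ofReal (f x) ∂ν + ENNReal.ofReal D * ENNReal.ofReal b ≠ ∞ := by
    exact ENNReal.add_ne_top.mpr ⟨hνfin, ENNReal.mul_ne_top ENNReal.ofReal_ne_top ENNReal.ofReal_ne_top⟩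
  rw [hμr, hνr]
  calc (∫⁻ x, ENNReal.ofReal (f x) ∂μ).toReal
      ≤ (∫⁻ x, ENNReal.ofReal (f x) ∂ν + ENNReal.ofReal D * ENNReal.ofReal b).toReal :=
        ENNReal.toReal_mono hrhs step
  _ = (∫⁻ x, ENNReal.ofReal (f x) ∂ν).toReal + D * b := by
        rw [ENNReal.toReal_add hνfin (ENNReal.mul_ne_top ENNReal.ofReal_ne_top ENNReal.ofReal_ne_top),
          ENNReal.toReal_mul, ENNReal.toReal_ofReal hD, ENNReal.toReal_ofReal hb]
  _ = (∫⁻ x, ENNReal.ofReal (f x) ∂ν).toReal + b * D := by ring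

/-- Oscillation version of the comparison. -/
lemma abs_integral_sub_le {X : Type*} [MeasurableSpace X] [Nonempty X]
    (μ ν : Measure X) [IsProbabilityMeasure μ] [IsProbabilityMeasure ν]
    {f : X → ℝ} (hf : Measurable f) {b D : ℝ} (hD : 0 ≤ D)
    (hf0 : ∀ x, 0 ≤ f x) (hf1 : ∀ x, f x ≤ 1)
    (hosc : ∀ x y, |f x - f y| ≤ b)
    (hsets : ∀ s : Set X, MeasurableSet s → |(μ s).toReal - (ν s).toReal| ≤ D) :
    |∫ x, f x ∂μ - ∫ x, f x ∂ν| ≤ b * D := by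
  obtain ⟨x₀⟩ := ‹Nonempty X›
  have hb : 0 ≤ b := le_trans (abs_nonneg _) (hosc x₀ x₀)
  set c : ℝ := ⨅ x, f x with hc
  have hbdd : BddBelow (Set.range f) := ⟨0, by rintro r ⟨x, rfl⟩; exact hf0 x⟩
  have hcle : ∀ x, c ≤ f x := fun x => ciInf_le hbdd x
  have hlec : ∀ x, f x - b ≤ c := by
    intro x
    refine le_ciInf fun y => ?_
    have := (abs_sub_le_iff.mp (hosc x y)).1
    linarith
  set g : X → ℝ := fun x => f x - c with hg
  have hgm : Measurable g := hf.sub measurable_const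
  have hg0 : ∀ x, 0 ≤ g x := fun x => by simp [hg]; exact hcle x
  have hgb : ∀ x, g x ≤ b := fun x => by have := hlec x; simp [hg]; linarith
  have hint : ∀ ρ : Measure X, [IsProbabilityMeasure ρ] → ∫ x, g x ∂ρ = ∫ x, f x ∂ρ - c := by
    intro ρ hρ
    have hfi : Integrable f ρ := by
      refine Integrable.mono' (integrable_const 1) hf.aestronglyMeasurable ?_
      filter_upwards with x
      rw [Real.norm_eq_abs, abs_le]
      exact ⟨by linarith [hf0 x], hf1 x⟩
    rw [hg]
    rw [integral_sub hfi (integrable_const c), integral_const]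
    simp
  have h1 : ∫ x, g x ∂μ ≤ ∫ x, g x ∂ν + b * D := by
    refine integral_le_integral_add μ ν hgm hb hD hg0 hgb fun s hs => ?_
    have := (abs_sub_le_iff.mp (hsets s hs)).1
    linarith
  have h2 : ∫ x, g x ∂ν ≤ ∫ x, g x ∂μ + b * D := by
    refine integral_le_integral_add ν μ hgm hb hD hg0 hgb fun s hs => ?_
    have := (abs_sub_le_iff.mp (hsets s hs)).2
    linarith
  rw [hint μ, hint ν] at h1 h2
  rw [abs_sub_le_iff]
  constructor <;> linarith

theorem stationary_measure_perturbation {X : Type*} [TopologicalSpace X] [PolishSpace X]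
    [MeasurableSpace X] [BorelSpace X]
    (κ κε : Kernel X X) [IsMarkovKernel κ] [IsMarkovKernel κε]
    (a : ℝ) (ha : a ∈ Set.Ioo (0:ℝ) 1)
    (hD : ∀ x y : X, tvDist (κ x) (κ y) ≤ 1 - a)
    (ε : ℝ) (hε : 0 < ε) (happrox : ∀ x : X, tvDist (κε x) (κ x) ≤ ε)
    (μ : Measure X) [IsProbabilityMeasure μ] (hμ : stepK κ μ = μ)
    (με : Measure X) [IsProbabilityMeasure με] (hμε : stepK κε με = με) :
    tvDist μ με ≤ ε / a := by
  obtain ⟨ha0, ha1⟩ := ha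
  have hne : Nonempty X := by
    by_contra h
    have : IsEmpty X := not_nonempty_iff.mp h
    have h1 : μ Set.univ = 1 := measure_univ
    rw [Set.univ_eq_empty_iff.mpr this, measure_empty] at h1
    exact zero_ne_one h1
  set D : ℝ := tvDist μ με with hDdef
  have hDnn : 0 ≤ D := tvDist_nonneg μ με
  -- main estimate for each measurable set
  have main : ∀ s : Set X, MeasurableSet s →
      |(μ s).toReal - (με s).toReal| ≤ (1 - a) * D + ε := by
    intro s hs
    set f : X → ℝ := fun x => ((κ x) s).toReal with hf
    set g : X → ℝ := fun x => ((κε x) s).toReal with hg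
    have hfm : Measurable f := (Kernel.measurable_coe κ hs).ennreal_toReal
    have hgm : Measurable g := (Kernel.measurable_coe κε hs).ennreal_toReal
    have hf0 : ∀ x, 0 ≤ f x := fun x => ENNReal.toReal_nonneg
    have hf1 : ∀ x, f x ≤ 1 := fun x => by
      have := prob_le_one (μ := κ x) (s := s)
      simpa [hf] using ENNReal.toReal_mono ENNReal.one_ne_top this
    have hg0 : ∀ x, 0 ≤ g x := fun x => ENNReal.toReal_nonneg
    have hg1 : ∀ x, g x ≤ 1 := fun x => by
      have := prob_le_one (μ := κε x) (s := s)
      simpa [hg] using ENNReal.toReal_mono ENNReal.one_ne_top this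
    -- expressions for μ s and με s
    have hμs : (μ s).toReal = ∫ x, f x ∂μ := by
      conv_lhs => rw [← hμ]
      rw [stepK, Measure.bind_apply hs κ.measurable.aemeasurable]
      rw [integral_toReal (κ.measurable_coe hs).aemeasurable
        (Eventually.of_forall fun x => measure_lt_top _ _)]
    have hμεs : (με s).toReal = ∫ x, g x ∂με := by
      conv_lhs => rw [← hμε]
      rw [stepK, Measure.bind_apply hs κε.measurable.aemeasurable]
      rw [integral_toReal (κε.measurable_coe hs).aemeasurable
        (Eventually.of_forall fun x => measure_lt_top _ _)]
    -- first piece: Doeblin contraction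
    have piece1 : |∫ x, f x ∂μ - ∫ x, f x ∂με| ≤ (1 - a) * D := by
      refine abs_integral_sub_le μ με hfm hDnn hf0 hf1 ?_ ?_
      · intro x y
        calc |f x - f y| ≤ tvDist (κ x) (κ y) := abs_le_tvDist (κ x) (κ y) hs
        _ ≤ 1 - a := hD x y
      · intro t ht
        exact abs_le_tvDist μ με ht
    -- second piece: perturbation
    have piece2 : |∫ x, f x ∂με - ∫ x, g x ∂με| ≤ ε := by
      have hfi : Integrable f με := by
        refine Integrable.mono' (integrable_const 1) hfm.aestronglyMeasurable ?_
        filter_upwards with x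
        rw [Real.norm_eq_abs, abs_le]; exact ⟨by linarith [hf0 x], hf1 x⟩
      have hgi : Integrable g με := by
        refine Integrable.mono' (integrable_const 1) hgm.aestronglyMeasurable ?_
        filter_upwards with x
        rw [Real.norm_eq_abs, abs_le]; exact ⟨by linarith [hg0 x], hg1 x⟩
      rw [← integral_sub hfi hgi]
      have hb : ∀ x, ‖f x - g x‖ ≤ ε := by
        intro x
        rw [Real.norm_eq_abs]
        calc |f x - g x| = |g x - f x| := abs_sub_comm _ _
        _ ≤ tvDist (κε x) (κ x) := abs_le_tvDist (κε x) (κ x) hs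
        _ ≤ ε := happrox x
      calc |∫ x, (f x - g x) ∂με| = ‖∫ x, (f x - g x) ∂με‖ := (Real.norm_eq_abs _).symm
      _ ≤ ε * (με Set.univ).toReal :=
          norm_integral_le_of_norm_le_const (Eventually.of_forall hb)
      _ = ε := by simp
    rw [hμs, hμεs]
    calc |∫ x, f x ∂μ - ∫ x, g x ∂με|
        ≤ |∫ x, f x ∂μ - ∫ x, f x ∂με| + |∫ x, f x ∂με - ∫ x, g x ∂με| := abs_sub_le _ _ _
    _ ≤ (1 - a) * D + ε := add_le_add piece1 piece2
  have hDle : D ≤ (1 - a) * D + ε := tvDist_le μ με main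
  rw [le_div_iff₀ ha0]
  nlinarith
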